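/- The pushforward of the Haar measure d on the unit circle under u ↦ u + u⁻¹ is the arcsine distribution on [-2, 2], with density x ↦ 1/(π√(4 - x²)). -/

import Mathlib

open MeasureTheory Complex Real
open Set
open scoped ENNReal

/-- Haar probability measure on the unit circle in ℂ. -/
noncomputable def haarCircle : Measure ℂ :=
  (ENNReal.ofReal (2 * π))⁻¹ •
    Measure.map (fun θ : ℝ => Complex.exp (θ * Complex.I))
      (volume.restrict (Set.Ioc 0 (2 * π)))

/-- The arcsine distribution on [-2, 2], with density 1/(π√(4 - x²)). -/
noncomputable def arcsineDist : Measure ℝ :=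
  (volume.restrict (Set.Ioo (-2 : ℝ) 2)).withDensity
    (fun x => ENNReal.ofReal (1 / (π * Real.sqrt (4 - x ^ 2))))

noncomputable def fc : ℝ → ℝ := fun θ => 2 * Real.cos θ

lemma fc_measurable : Measurable fc := measurable_const.mul Real.measurable_cos

lemma map_wd {α β : Type*} [MeasurableSpace α] [MeasurableSpace β] {f : α → β} {g : β → ℝ≥0∞}
    (hf : Measurable f) (hg : Measurable g) (μ : Measure α) :
    Measure.map f (μ.withDensity (g ∘ f)) = (Measure.map f μ).withDensity g := by
  ext s hs
  rw [Measure.map_apply hf hs, withDensity_apply _ hs, withDensity_apply _ (hf hs),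
    setLIntegral_map hs hg hf]
  rfl

lemma fc_image : fc '' Ioo 0 π = Ioo (-2 : ℝ) 2 := by
  ext y
  constructor
  · rintro ⟨θ, ⟨h0, hπ⟩, rfl⟩
    have h1 : Real.cos θ < 1 := by
      have := Real.strictAntiOn_cos ⟨le_refl 0, Real.pi_pos.le⟩ ⟨h0.le, hπ.le⟩ h0
      simpa using this
    have h2 : -1 < Real.cos θ := by
      have := Real.strictAntiOn_cos ⟨h0.le, hπ.le⟩ ⟨Real.pi_pos.le, le_refl π⟩ hπ
      simpa using this
    exact ⟨by simp [fc]; linarith, by simp [fc]; linarith⟩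
  · rintro ⟨h1, h2⟩
    refine ⟨Real.arccos (y / 2), ⟨?_, ?_⟩, ?_⟩
    · exact Real.arccos_pos.2 (by linarith)
    · exact lt_of_le_of_ne (Real.arccos_le_pi _) (fun h => by
        have := Real.arccos_eq_pi.1 h; linarith)
    · simp only [fc]
      rw [Real.cos_arccos (by linarith) (by linarith)]
      ring

lemma fc_injOn : InjOn fc (Ioo 0 π) := by
  intro a ha b hb h
  have : Real.cos a = Real.cos b := by simp only [fc] at h; linarith
  exact Real.injOn_cos ⟨ha.1.le, ha.2.le⟩ ⟨hb.1.le, hb.2.le⟩ this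

lemma cov :
    Measure.map fc ((volume.restrict (Ioo 0 π)).withDensity
      fun θ => ENNReal.ofReal (2 * Real.sin θ)) = volume.restrict (Ioo (-2 : ℝ) 2) := by
  have hd : ∀ θ ∈ Ioo (0:ℝ) π,
      HasFDerivWithinAt fc ((1 : ℝ →L[ℝ] ℝ).smulRight (-(2 * Real.sin θ))) (Ioo 0 π) θ := by
    intro θ _
    have : HasDerivAt fc (-(2 * Real.sin θ)) θ := by
      show HasDerivAt (fun θ => 2 * Real.cos θ) _ θ
      simpa [mul_comm] using (Real.hasDerivAt_cos θ).const_mul 2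
    exact this.hasDerivWithinAt.hasFDerivWithinAt
  have := map_withDensity_abs_det_fderiv_eq_addHaar (μ := volume) measurableSet_Ioo.nullMeasurableSet hd fc_injOn
  rw [fc_image] at this
  rw [← this]
  congr 1
  apply withDensity_congr_ae
  filter_upwards [ae_restrict_mem measurableSet_Ioo] with θ hθ
  have hs : 0 ≤ Real.sin θ := (Real.sin_pos_of_pos_of_lt_pi hθ.1 hθ.2).le
  rw [ContinuousLinearMap.det_smulRight, ContinuousLinearMap.one_apply, one_mul, abs_neg, _root_.abs_of_nonneg (by linarith : (0:ℝ) ≤ 2 * Real.sin θ)]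

lemma two_cos_map :
    Measure.map fc (volume.restrict (Ioc 0 (2 * π))) =
      (2 : ℝ≥0∞) • Measure.map fc (volume.restrict (Ioo 0 π)) := by
  have hdisj : Disjoint (Ioo (0:ℝ) π) (Icc π (2 * π)) := by
    rw [Set.disjoint_left]
    rintro x ⟨_, h⟩ ⟨h', _⟩
    exact absurd h' (not_le.2 h)
  have hsplit : volume.restrict (Ioc 0 (2 * π)) =
      volume.restrict (Ioo 0 π) + volume.restrict (Icc π (2 * π)) := by
    rw [← Measure.restrict_union hdisj measurableSet_Icc,
      Ioo_union_Icc_eq_Ioc Real.pi_pos (by linarith [Real.pi_pos])]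
  have hr : Measurable fun θ : ℝ => 2 * π - θ := measurable_const.sub measurable_id
  have hmp : MeasurePreserving (fun θ : ℝ => 2 * π - θ) volume volume :=
    Measure.measurePreserving_sub_left volume (2 * π)
  have hpre : (fun θ : ℝ => 2 * π - θ) ⁻¹' Ioo 0 π = Ioo π (2 * π) := by
    ext θ
    simp only [mem_preimage, mem_Ioo]
    constructor <;> rintro ⟨a, b⟩ <;> constructor <;> linarith
  have h2 : Measure.map (fun θ : ℝ => 2 * π - θ) (volume.restrict (Ioo π (2 * π))) =
      volume.restrict (Ioo 0 π) := by
    rw [← hpre]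
    exact (hmp.restrict_preimage measurableSet_Ioo).map_eq
  have hIcc : Measure.map fc (volume.restrict (Icc π (2 * π))) =
      Measure.map fc (volume.restrict (Ioo 0 π)) := by
    rw [Measure.restrict_congr_set Ioo_ae_eq_Icc |>.symm, ← h2,
      Measure.map_map fc_measurable hr]
    congr 1
    funext θ
    simp [fc, Function.comp, Real.cos_two_pi_sub]
  rw [hsplit, Measure.map_add _ _ fc_measurable, hIcc, ← two_smul ℝ≥0∞]

theorem map_haar_arcsine :
    Measure.map (fun u : ℂ => 2 * u.re) haarCircle = arcsineDist := by
  have hexp : Measurable fun θ : ℝ => Complex.exp (θ * Complex.I) := by fun_prop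
  have hre : Measurable fun u : ℂ => 2 * u.re := by fun_prop
  have hg : Measurable fun x : ℝ => ENNReal.ofReal (1 / (π * Real.sqrt (4 - x ^ 2))) := by
    apply Measurable.ennreal_ofReal
    fun_prop
  have harc : arcsineDist =
      ENNReal.ofReal (1 / π) • Measure.map fc (volume.restrict (Ioo 0 π)) := by
    rw [arcsineDist, ← cov, ← map_wd fc_measurable hg,
      ← withDensity_mul _ (by fun_prop) (hg.comp fc_measurable)]
    have hdens : (volume.restrict (Ioo 0 π)).withDensity
        ((fun θ => ENNReal.ofReal (2 * Real.sin θ)) *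
          ((fun x : ℝ => ENNReal.ofReal (1 / (π * Real.sqrt (4 - x ^ 2)))) ∘ fc)) =
        (volume.restrict (Ioo 0 π)).withDensity (fun _ => ENNReal.ofReal (1 / π)) := by
      apply withDensity_congr_ae
      filter_upwards [ae_restrict_mem measurableSet_Ioo] with θ hθ
      have hsθ : 0 < Real.sin θ := Real.sin_pos_of_pos_of_lt_pi hθ.1 hθ.2
      simp only [Pi.mul_apply, Function.comp_apply]
      have h4 : 4 - fc θ ^ 2 = (2 * Real.sin θ) ^ 2 := by
        simp only [fc]
        nlinarith [Real.sin_sq_add_cos_sq θ]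
      rw [h4, Real.sqrt_sq (by linarith), ← ENNReal.ofReal_mul (by linarith)]
      congr 1
      field_simp
    rw [hdens, withDensity_const, Measure.map_smul]
  rw [haarCircle, Measure.map_smul, Measure.map_map hre hexp,
    show ((fun u : ℂ => 2 * u.re) ∘ fun θ : ℝ => Complex.exp (θ * Complex.I)) = fc by
      funext θ; simp [fc, Function.comp, Complex.exp_ofReal_mul_I_re],
    two_cos_map, harc, smul_smul]
  congr 1
  have hπ : (0:ℝ) < π := Real.pi_pos
  rw [ENNReal.ofReal_mul (by norm_num : (0:ℝ) ≤ 2),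
    show ENNReal.ofReal 2 = 2 by norm_num [ENNReal.ofReal_ofNat],
    ENNReal.mul_inv (Or.inl two_ne_zero) (Or.inl (by simp)),
    one_div, ENNReal.ofReal_inv_of_pos hπ, mul_comm, ← mul_assoc,
    ENNReal.mul_inv_cancel two_ne_zero (by simp), one_mul]
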